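/- If the graph G_t is δ-nontrivial (i.e., there exist i, j ∈ [n] with |x_i(t) − x_j(t)| > δ) and G_t has a δ-nontrivial connected component, then ∑_{i ∈ [n]} (x_i(t) − x_i(t+1))² > 2δ² / (n⁶·|E|²). -/

import Mathlib

open Finset
open scoped Classical

/-- The threshold graph `G_t`: social neighbors whose garbage differs by at most `ε`. -/
def Gt {n : ℕ} (G : SimpleGraph (Fin n)) (x : ℕ → Fin n → ℝ) (ε : ℝ) (t : ℕ) :
    SimpleGraph (Fin n) where
  Adj i j := G.Adj i j ∧ |x t i - x t j| ≤ ε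
  symm := by
    constructor
    intro i j h
    exact ⟨h.1.symm, by rw [abs_sub_comm]; exact h.2⟩
  loopless := by
    constructor
    intro i h
    exact G.irrefl h.1

/-- `|E_t|`: the number of edges of `G_t`. -/
noncomputable def Ecard {n : ℕ} (G : SimpleGraph (Fin n)) (x : ℕ → Fin n → ℝ) (ε : ℝ)
    (t : ℕ) : ℕ :=
  (Gt G x ε t).edgeSet.ncard

/-- `N_i(t)`: the neighbors of `i` in `G_t`, as a finset. -/
noncomputable def Nb {n : ℕ} (G : SimpleGraph (Fin n)) (x : ℕ → Fin n → ℝ) (ε : ℝ)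
    (t : ℕ) (i : Fin n) : Finset (Fin n) :=
  Finset.univ.filter fun j => (Gt G x ε t).Adj i j

/-- The update rule of the garbage disposal game. -/
def Update {n : ℕ} (G : SimpleGraph (Fin n)) (x : ℕ → Fin n → ℝ) (ε : ℝ) : Prop :=
  ∀ t i,
    x (t + 1) i =
      (if (Gt G x ε t).edgeSet.Nonempty then (1 : ℝ) else 0) / (Ecard G x ε t : ℝ) *
          ∑ j ∈ Nb G x ε t i, x t j +
        (1 - ((Nb G x ε t i).card : ℝ) / (Ecard G x ε t : ℝ) *
            (if (Gt G x ε t).edgeSet.Nonempty then (1 : ℝ) else 0)) * x t i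

/-- The Lyapunov functional `Z_t`. -/
noncomputable def Z {n : ℕ} (G : SimpleGraph (Fin n)) (x : ℕ → Fin n → ℝ) (ε : ℝ)
    (t : ℕ) : ℝ :=
  ∑ i, ∑ j,
    max (min (ε ^ 2) ((x t i - x t j) ^ 2)) (ε ^ 2 * if ¬ G.Adj i j then 1 else 0)


/-- Crossing edge along a walk. -/
lemma cross_edge_aux {V : Type*} {G : SimpleGraph V} (A : Finset V) :
    ∀ {u v : V}, G.Walk u v → u ∈ A → v ∉ A → ∃ a ∈ A, ∃ b, G.Adj a b ∧ b ∉ A := by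
  intro u v w
  induction w with
  | nil => intro h h'; exact absurd h h'
  | @cons u c v h p ih =>
    intro hu hv
    by_cases hc : c ∈ A
    · exact ih hc hv
    · exact ⟨u, hu, c, h, hc⟩

/-- Pigeonhole: some interval `(c + kη, c + kη + η]` misses all values of `y`. -/
lemma exists_gap_aux {α : Type*} [Fintype α] (y : α → ℝ) (c η : ℝ) (hη : 0 < η)
    (i0 : α) (hc : y i0 ≤ c) :
    ∃ k ∈ Finset.range (Fintype.card α),
      ∀ v : α, ¬ (c + k * η < y v ∧ y v ≤ c + k * η + η) := by
  by_contra hcon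
  push_neg at hcon
  have hcon' : ∀ k : ℕ, ∃ v : α,
      k ∈ Finset.range (Fintype.card α) → c + k * η < y v ∧ y v ≤ c + k * η + η := by
    intro k
    by_cases h : k ∈ Finset.range (Fintype.card α)
    · obtain ⟨v, hv⟩ := hcon k h
      exact ⟨v, fun _ => hv⟩
    · exact ⟨i0, fun h' => absurd h' h⟩
  choose f hf using hcon'
  have hcard : 0 < Fintype.card α := Fintype.card_pos_iff.mpr ⟨i0⟩
  have hlt : #(Finset.univ.erase i0) < #(Finset.range (Fintype.card α)) := by
    rw [Finset.card_erase_of_mem (Finset.mem_univ i0), Finset.card_range,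
      Finset.card_univ]
    omega
  have hmaps : ∀ k ∈ Finset.range (Fintype.card α), f k ∈ Finset.univ.erase i0 := by
    intro k hk
    refine Finset.mem_erase.mpr ⟨?_, Finset.mem_univ _⟩
    intro h
    have h1 := (hf k hk).1
    rw [h] at h1
    have : (0:ℝ) ≤ k * η := by positivity
    linarith
  obtain ⟨a, ha, b, hb, hab, heq⟩ :=
    Finset.exists_ne_map_eq_of_card_lt_of_maps_to hlt hmaps
  -- wlog a < b
  rcases hab.lt_or_gt with h | h
  · have h1 := (hf a ha).2
    have h2 := (hf b hb).1
    rw [heq] at h1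
    have : (a:ℝ) + 1 ≤ b := by exact_mod_cast h
    nlinarith
  · have h1 := (hf b hb).2
    have h2 := (hf a ha).1
    rw [heq] at h2
    have : (b:ℝ) + 1 ≤ a := by exact_mod_cast h
    nlinarith

set_option maxHeartbeats 1000000 in
lemma main_aux {n : ℕ} (G : SimpleGraph (Fin n)) (x : ℕ → Fin n → ℝ) (ε : ℝ)
    (hupd : Update G x ε) (δ : ℝ) (hδ : 0 < δ) (t : ℕ)
    (H : (Gt G x ε t).ConnectedComponent) (i0 j0 : Fin n)
    (hi0 : i0 ∈ H.supp) (hj0 : j0 ∈ H.supp) (hlt : x t i0 + δ < x t j0) :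
    ∑ i, (x t i - x (t + 1) i) ^ 2 >
      2 * δ ^ 2 / ((n : ℝ) ^ 6 * (G.edgeSet.ncard : ℝ) ^ 2) := by
  have hne : i0 ≠ j0 := by intro h; rw [h] at hlt; linarith
  have hn2 : 2 ≤ n := by
    have : Nontrivial (Fin n) := ⟨⟨i0, j0, hne⟩⟩
    have h := Fintype.one_lt_card (α := Fin n); simp at h; omega
  have hnR : (2:ℝ) ≤ (n:ℝ) := by exact_mod_cast hn2
  have hnpos : (0:ℝ) < (n:ℝ) := by linarith
  set η : ℝ := δ / n with hηdef
  have hη : 0 < η := div_pos hδ hnpos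
  obtain ⟨k, hk, hgap⟩ := exists_gap_aux (x t) (x t i0) η hη i0 le_rfl
  rw [Finset.mem_range, Fintype.card_fin] at hk
  set θ : ℝ := x t i0 + (k:ℝ) * η with hθdef
  set A : Finset (Fin n) :=
    Finset.univ.filter (fun v => v ∈ H.supp ∧ x t v ≤ θ) with hAdef
  have hkη : (0:ℝ) ≤ (k:ℝ) * η := by positivity
  have hi0A : i0 ∈ A := by
    rw [hAdef, Finset.mem_filter]
    exact ⟨Finset.mem_univ _, hi0, by linarith⟩
  have hθδ : θ + η ≤ x t i0 + δ := by
    have hk1 : ((k:ℝ) + 1) ≤ n := by exact_mod_cast hk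
    have hnη : (n:ℝ) * η = δ := by
      rw [hηdef]; field_simp
    have : θ + η = x t i0 + ((k:ℝ) + 1) * η := by rw [hθdef]; ring
    rw [this]
    nlinarith
  have hsupp : ∀ u v, u ∈ H.supp → (Gt G x ε t).Adj u v → v ∈ H.supp := by
    intro u v hu hadj
    rw [SimpleGraph.ConnectedComponent.mem_supp_iff] at hu ⊢
    rw [← hu]
    exact SimpleGraph.ConnectedComponent.sound hadj.symm.reachable
  have hcross : ∀ u ∈ A, ∀ v, (Gt G x ε t).Adj u v → v ∉ A → x t u + η < x t v := by
    intro u hu v hadj hv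
    rw [hAdef, Finset.mem_filter] at hu
    have hvsupp := hsupp u v hu.2.1 hadj
    have hvθ : θ < x t v := by
      by_contra h
      push_neg at h
      exact hv (by rw [hAdef, Finset.mem_filter]; exact ⟨Finset.mem_univ _, hvsupp, h⟩)
    have hvθη : θ + η < x t v := by
      by_contra hle
      push_neg at hle
      exact hgap v ⟨hvθ, hle⟩
    have := hu.2.2
    linarith
  have hj0A : j0 ∉ A := by
    rw [hAdef, Finset.mem_filter]
    rintro ⟨-, -, h⟩
    linarith
  have hreach : (Gt G x ε t).Reachable i0 j0 := by
    rw [SimpleGraph.ConnectedComponent.mem_supp_iff] at hi0 hj0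
    exact SimpleGraph.ConnectedComponent.exact (hi0.trans hj0.symm)
  obtain ⟨a, haA, b, hab, hbA⟩ := cross_edge_aux A hreach.some hi0A hj0A
  -- cardinalities of edge sets
  have hEne : (Gt G x ε t).edgeSet.Nonempty := ⟨s(a,b), ((Gt G x ε t).mem_edgeSet).mpr hab⟩
  have hm1 : 1 ≤ Ecard G x ε t := (Set.ncard_pos (Set.toFinite _)).mpr hEne
  have hmE : Ecard G x ε t ≤ G.edgeSet.ncard := by
    refine Set.ncard_le_ncard ?_ (Set.toFinite _)
    refine SimpleGraph.edgeSet_subset_edgeSet.mpr ?_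
    intro u v h
    exact h.1
  have hE1 : 1 ≤ G.edgeSet.ncard := le_trans hm1 hmE
  have hmpos : (0:ℝ) < (Ecard G x ε t : ℝ) := by exact_mod_cast hm1
  have hepos : (0:ℝ) < (G.edgeSet.ncard : ℝ) := by exact_mod_cast hE1
  have heR : (1:ℝ) ≤ (G.edgeSet.ncard : ℝ) := by exact_mod_cast hE1
  have hmeR : (Ecard G x ε t : ℝ) ≤ (G.edgeSet.ncard : ℝ) := by exact_mod_cast hmE
  have hmemNb : ∀ i j, j ∈ Nb G x ε t i ↔ (Gt G x ε t).Adj i j := by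
    intro i j; simp [Nb]
  -- the displacement formula
  have hΔ : ∀ i, x (t+1) i - x t i =
      (∑ j ∈ Nb G x ε t i, (x t j - x t i)) / (Ecard G x ε t : ℝ) := by
    intro i
    rw [hupd t i, if_pos hEne, Finset.sum_sub_distrib, Finset.sum_const, nsmul_eq_mul]
    field_simp
    ring
  set T1 : ℝ := ∑ v ∈ A, ∑ j ∈ (Nb G x ε t v).filter (· ∈ A), (x t j - x t v) with hT1def
  set T2 : ℝ := ∑ v ∈ A, ∑ j ∈ (Nb G x ε t v).filter (· ∉ A), (x t j - x t v) with hT2def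
  have hT : (∑ v ∈ A, ∑ j ∈ Nb G x ε t v, (x t j - x t v)) = T1 + T2 := by
    rw [hT1def, hT2def, ← Finset.sum_add_distrib]
    exact Finset.sum_congr rfl fun v _ => (Finset.sum_filter_add_sum_filter_not _ _ _).symm
  have hT1 : T1 = 0 := by
    have hrw : T1 = ∑ v ∈ A, ∑ j ∈ A,
        (if (Gt G x ε t).Adj v j then x t j - x t v else 0) := by
      rw [hT1def]
      refine Finset.sum_congr rfl fun v _ => ?_
      rw [show (Nb G x ε t v).filter (· ∈ A) = A.filter (fun j => (Gt G x ε t).Adj v j)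
        from by ext j; simp only [Finset.mem_filter, hmemNb]; tauto, Finset.sum_filter]
    have hkey : (∑ v ∈ A, ∑ j ∈ A, (if (Gt G x ε t).Adj v j then x t j - x t v else 0))
        = - ∑ v ∈ A, ∑ j ∈ A, (if (Gt G x ε t).Adj v j then x t j - x t v else 0) := by
      nth_rewrite 1 [Finset.sum_comm]
      rw [← Finset.sum_neg_distrib]
      refine Finset.sum_congr rfl fun j _ => ?_
      rw [← Finset.sum_neg_distrib]
      refine Finset.sum_congr rfl fun v _ => ?_
      by_cases h : (Gt G x ε t).Adj v j
      · rw [if_pos h, if_pos h.symm]; ring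
      · rw [if_neg h, if_neg (fun h' => h h'.symm)]; ring
    rw [hrw]
    linarith [hkey]
  have hposT2 : ∀ v ∈ A, ∀ j ∈ (Nb G x ε t v).filter (· ∉ A), η < x t j - x t v := by
    intro v hv j hj
    rw [Finset.mem_filter, hmemNb] at hj
    have := hcross v hv j hj.1 hj.2
    linarith
  have hinner_nonneg : ∀ v ∈ A, (0:ℝ) ≤ ∑ j ∈ (Nb G x ε t v).filter (· ∉ A), (x t j - x t v) := by
    intro v hv
    exact Finset.sum_nonneg fun j hj => le_of_lt (lt_trans hη (hposT2 v hv j hj))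
  have hb_mem : b ∈ (Nb G x ε t a).filter (· ∉ A) :=
    Finset.mem_filter.mpr ⟨(hmemNb a b).mpr hab, hbA⟩
  have hT2 : η < T2 := by
    have h1 : η < ∑ j ∈ (Nb G x ε t a).filter (· ∉ A), (x t j - x t a) :=
      lt_of_lt_of_le (hposT2 a haA b hb_mem)
        (Finset.single_le_sum
          (fun j hj => le_of_lt (lt_trans hη (hposT2 a haA j hj))) hb_mem)
    exact lt_of_lt_of_le h1 (Finset.single_le_sum (fun v hv => hinner_nonneg v hv) haA)
  set S : ℝ := ∑ v ∈ A, (x (t+1) v - x t v) with hSdef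
  clear_value S
  have hS : S = (T1 + T2) / (Ecard G x ε t : ℝ) := by
    rw [hSdef, ← hT, Finset.sum_div]
    exact Finset.sum_congr rfl fun v _ => hΔ v
  have hSgt : δ / ((n:ℝ) * (G.edgeSet.ncard : ℝ)) < S := by
    rw [hS, hT1, zero_add]
    have h1 : δ / ((n:ℝ) * (G.edgeSet.ncard : ℝ)) = η / (G.edgeSet.ncard : ℝ) := by
      rw [hηdef, div_div]
    rw [h1]
    have h2 : η / (G.edgeSet.ncard : ℝ) ≤ η / (Ecard G x ε t : ℝ) := by
      apply div_le_div_of_nonneg_left (le_of_lt hη) hmpos hmeR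
    refine lt_of_le_of_lt h2 ?_
    exact (div_lt_div_iff_of_pos_right hmpos).mpr hT2
  -- Cauchy–Schwarz
  have hsA0 : (0:ℝ) ≤ ∑ v ∈ A, (x (t+1) v - x t v)^2 :=
    Finset.sum_nonneg fun _ _ => sq_nonneg _
  have hCS : S^2 ≤ (A.card : ℝ) * ∑ v ∈ A, (x (t+1) v - x t v)^2 := by
    have h := Finset.sum_mul_sq_le_sq_mul_sq A (fun v => x (t+1) v - x t v) (fun _ => (1:ℝ))
    simp only [mul_one, one_pow, Finset.sum_const, nsmul_eq_mul] at h
    calc S^2 = (∑ v ∈ A, (x (t+1) v - x t v))^2 := by rw [hSdef]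
      _ ≤ (∑ v ∈ A, (x (t+1) v - x t v)^2) * ((A.card : ℝ)) := by simpa using h
      _ = _ := by ring
  have hcardA : (A.card : ℝ) ≤ (n:ℝ) := by
    have h : A.card ≤ n := le_trans (Finset.card_le_univ A) (by simp)
    exact_mod_cast h
  have hsub : ∑ v ∈ A, (x (t+1) v - x t v)^2 ≤ ∑ v, (x (t+1) v - x t v)^2 :=
    Finset.sum_le_sum_of_subset_of_nonneg (Finset.subset_univ _) (fun i _ _ => sq_nonneg _)
  have hgoal_eq : (∑ i, (x t i - x (t+1) i)^2) = ∑ i, (x (t+1) i - x t i)^2 :=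
    Finset.sum_congr rfl fun i _ => by ring
  rw [gt_iff_lt, hgoal_eq]
  set D : ℝ := ∑ i, (x (t+1) i - x t i)^2 with hDdef
  clear_value D
  have hD0 : (0:ℝ) ≤ D := by
    rw [hDdef]; exact Finset.sum_nonneg fun i _ => sq_nonneg _
  have hND : S^2 ≤ (n:ℝ) * D := by
    refine hCS.trans ?_
    exact mul_le_mul hcardA hsub hsA0 hnpos.le
  set e : ℝ := (G.edgeSet.ncard : ℝ) with hedef
  clear_value e
  have hq0 : 0 < δ / ((n:ℝ) * e) := by positivity
  have hS2 : (δ / ((n:ℝ) * e))^2 < S^2 := by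
    rw [pow_two, pow_two]
    exact mul_lt_mul'' hSgt hSgt hq0.le hq0.le
  rw [div_lt_iff₀ (by positivity)]
  have h1 : δ^2 < (n:ℝ)^3 * D * e^2 := by
    have h2 : (δ/((n:ℝ)*e))^2 = δ^2 / ((n:ℝ)^2 * e^2) := by
      rw [div_pow]; ring_nf
    rw [h2] at hS2
    have h3 := lt_of_lt_of_le hS2 hND
    rw [div_lt_iff₀ (by positivity)] at h3
    nlinarith [h3]
  have h3 : (n:ℝ)^3 * δ^2 < (n:ℝ)^3 * ((n:ℝ)^3 * D * e^2) :=
    mul_lt_mul_of_pos_left h1 (by positivity)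
  have h4 : (8:ℝ) ≤ (n:ℝ)^3 := by
    have := pow_le_pow_left₀ (by norm_num : (0:ℝ) ≤ 2) hnR 3
    norm_num at this
    linarith
  nlinarith [h3, h4, sq_nonneg δ, mul_nonneg (by linarith : (0:ℝ) ≤ (n:ℝ)^3 - 8) (sq_nonneg δ)]

/-- Lemma 8 (second part): if `G_t` is δ-nontrivial and has a δ-nontrivial component,
then `∑_i (x_i(t) − x_i(t+1))² > 2δ² / (n⁶ |E|²)`. -/
theorem delta_nontrivial_global {n : ℕ} (G : SimpleGraph (Fin n)) (x : ℕ → Fin n → ℝ)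
    (ε : ℝ) (hε : 0 < ε) (hx0 : ∀ i, 0 ≤ x 0 i) (hupd : Update G x ε)
    (δ : ℝ) (hδ : 0 < δ) (t : ℕ)
    (hnontriv : ∃ i j : Fin n, δ < |x t i - x t j|)
    (hcomp : ∃ H : (Gt G x ε t).ConnectedComponent,
      ∃ i ∈ H.supp, ∃ j ∈ H.supp, δ < |x t i - x t j|) :
    ∑ i, (x t i - x (t + 1) i) ^ 2 >
      2 * δ ^ 2 / ((n : ℝ) ^ 6 * (G.edgeSet.ncard : ℝ) ^ 2) := by
  obtain ⟨H, i0, hi0, j0, hj0, habs⟩ := hcomp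
  rcases lt_abs.mp habs with h | h
  · exact main_aux G x ε hupd δ hδ t H j0 i0 hj0 hi0 (by linarith)
  · exact main_aux G x ε hupd δ hδ t H i0 j0 hi0 hj0 (by linarith)
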